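/- Suppose (Λ_n) satisfies Condition (D^Λ). Then for every j ≤ q and every z ∈ D_j there exists i ≤ q such that D_i = ((D_j)_{−z})⁺ and λ_i ≥ λ_j. Consequently, setting 𝓖_j := {z ∈ D_j ∪ {0} : ((D_j)_{−z})⁺ = D_j}, the collection of distinct sets of the form ((D_j)_{−z})⁺ with z ∈ D_j \ 𝓖_j is finite, its cardinality b_j satisfies b_j ≤ ⌊1/λ_j⌋ − 1, and each of its members equals some D_l with λ_l ≥ λ_j. -/

import Mathlib

open scoped Classical Pointwise
open Filter Set

namespace Paper

/-- The index space `ℤ^k`. -/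
abbrev V (k : ℕ) := Fin k → ℤ

variable {k : ℕ}

/-- Translate of a set: `(A)_t = {a + t : a ∈ A}`. -/
def tr (A : Set (V k)) (t : V k) : Set (V k) := (fun a => a + t) '' A

/-- Positive part of a set with respect to the order `prec`: `A⁺ = {a ∈ A : 0 ≺ a}`. -/
def posPart (prec : V k → V k → Prop) (A : Set (V k)) : Set (V k) := {a ∈ A | prec 0 a}

/-- The hypercube `K_c = ([-c,c] ∩ ℤ)^k`. -/
def Kc (k c : ℕ) : Set (V k) := {t : V k | ∀ i, |t i| ≤ (c : ℤ)}

/-- `Λ^{(t,c)} = ((Λ)_{-t} ∩ K_c)⁺`. -/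
def window (prec : V k → V k → Prop) (Λ : Set (V k)) (t : V k) (c : ℕ) : Set (V k) :=
  posPart prec (tr Λ (-t) ∩ Kc k c)

/-- A translation-invariant total (strict) order on `ℤ^k`. -/
structure IsTransOrder (prec : V k → V k → Prop) : Prop where
  trans : ∀ {a b c : V k}, prec a b → prec b c → prec a c
  irrefl : ∀ a : V k, ¬ prec a a
  total : ∀ a b : V k, a ≠ b → prec a b ∨ prec b a
  invariant : ∀ a b i : V k, prec a b → prec (a + i) (b + i)

/-- Condition `(D^Λ)`: the index sets `Λ_n`, the asymptotic sets `D_1, …, D_q`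
(`q ∈ ℕ ∪ {∞}`, indexed by `i : ℕ` with `(i : ℕ∞) < q`), and the weights. -/
structure CondD (k : ℕ) where
  prec : V k → V k → Prop
  ord : IsTransOrder prec
  Lam : ℕ → Finset (V k)
  card_top : Tendsto (fun n => (Lam n).card) atTop atTop
  q : ℕ∞
  D : ℕ → Set (V k)
  D_subset : ∀ i : ℕ, (i : ℕ∞) < q → D i ⊆ {t : V k | prec 0 t}
  D_ne : ∀ i j : ℕ, (i : ℕ∞) < q → (j : ℕ∞) < q → i ≠ j → D i ≠ D j
  lamP : ℕ → ℕ → ℝ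
  lam : ℕ → ℝ
  tendsto_lamP : ∀ i p : ℕ, (i : ℕ∞) < q →
    Tendsto (fun n =>
        (((Lam n).filter fun t => window prec (Lam n : Set (V k)) t p = D i ∩ Kc k p).card : ℝ) /
          ((Lam n).card : ℝ))
      atTop (nhds (lamP i p))
  tendsto_lam : ∀ i : ℕ, (i : ℕ∞) < q → Tendsto (fun p => lamP i p) atTop (nhds (lam i))
  lam_pos : ∀ i : ℕ, (i : ℕ∞) < q → 0 < lam i
  lam_sum : ∑' i : {i : ℕ // (i : ℕ∞) < q}, lam i.1 = 1

/-- `((A)_{-z})⁺`, the shifted positive part of `A`. -/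
def shiftPos (prec : V k → V k → Prop) (A : Set (V k)) (z : V k) : Set (V k) :=
  posPart prec (tr A (-z))

/-- `𝓖(A) = {z ∈ A ∪ {0} : ((A)_{-z})⁺ = A}`. -/
def Gset (prec : V k → V k → Prop) (A : Set (V k)) : Set (V k) :=
  {z ∈ insert (0 : V k) A | shiftPos prec A z = A}
variable {k : ℕ}

lemma mem_tr_iff {A : Set (V k)} {u s : V k} : s ∈ tr A u ↔ s - u ∈ A := by
  constructor
  · rintro ⟨a, ha, rfl⟩; simpa using ha
  · intro h; exact ⟨s - u, h, by simp⟩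

lemma shift_window {prec : V k → V k → Prop} (ord : IsTransOrder prec)
    {Λ Dj : Set (V k)} (hD : Dj ⊆ {t | prec 0 t}) {z : V k} (hz : z ∈ Dj)
    {p p' : ℕ} (hp' : ∀ i, |z i| + (p : ℤ) ≤ (p' : ℤ)) {t : V k}
    (ht : window prec Λ t p' = Dj ∩ Kc k p') :
    t + z ∈ Λ ∧ window prec Λ (t + z) p = shiftPos prec Dj z ∩ Kc k p := by
  have h0z : prec 0 z := hD hz
  have hzK : z ∈ Kc k p' := by
    intro i; have h1 := hp' i; have h2 : (0:ℤ) ≤ (p:ℤ) := Int.ofNat_nonneg p; linarith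
  have hzw : z ∈ window prec Λ t p' := by
    rw [ht]; exact ⟨hz, hzK⟩
  have htz : t + z ∈ Λ := by
    obtain ⟨⟨hz1, _⟩, _⟩ := hzw
    rw [mem_tr_iff] at hz1
    simpa [sub_neg_eq_add, add_comm] using hz1
  refine ⟨htz, ?_⟩
  ext s
  simp only [window, posPart, shiftPos, Set.mem_inter_iff, Set.mem_setOf_eq, mem_tr_iff,
    sub_neg_eq_add]
  constructor
  · rintro ⟨⟨hsΛ, hsK⟩, hs0⟩
    refine ⟨⟨?_, hs0⟩, hsK⟩
    -- s + z ∈ Dj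
    have hszK : s + z ∈ Kc k p' := by
      intro i
      have := abs_add_le (s i) (z i)
      have h1 := hp' i
      have h2 := hsK i
      simp only [Pi.add_apply]
      calc |s i + z i| ≤ |s i| + |z i| := abs_add_le _ _
        _ ≤ (p:ℤ) + |z i| := by linarith
        _ ≤ (p':ℤ) := by linarith
    have h0sz : prec 0 (s + z) := by
      have := ord.invariant 0 s z hs0
      rw [zero_add] at this
      exact ord.trans h0z this
    have : s + z ∈ window prec Λ t p' := by
      refine ⟨⟨?_, hszK⟩, h0sz⟩
      rw [mem_tr_iff, sub_neg_eq_add]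
      have : s + (t + z) = s + z + t := by ring
      rwa [this] at hsΛ
    rw [ht] at this
    exact this.1
  · rintro ⟨⟨hsD, hs0⟩, hsK⟩
    refine ⟨⟨?_, hsK⟩, hs0⟩
    have hszK : s + z ∈ Kc k p' := by
      intro i
      have h1 := hp' i
      have h2 := hsK i
      simp only [Pi.add_apply]
      calc |s i + z i| ≤ |s i| + |z i| := abs_add_le _ _
        _ ≤ (p:ℤ) + |z i| := by linarith
        _ ≤ (p':ℤ) := by linarith
    have h0sz : prec 0 (s + z) := by
      have := ord.invariant 0 s z hs0
      rw [zero_add] at this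
      exact ord.trans h0z this
    have hmem : s + z ∈ window prec Λ t p' := by
      rw [ht]; exact ⟨hsD, hszK⟩
    obtain ⟨⟨h1, _⟩, _⟩ := hmem
    rw [mem_tr_iff, sub_neg_eq_add] at h1
    have : s + (t + z) = s + z + t := by ring
    rwa [this]

lemma card_shift {prec : V k → V k → Prop} (ord : IsTransOrder prec)
    {Dj : Set (V k)} (hD : Dj ⊆ {t | prec 0 t}) {z : V k} (hz : z ∈ Dj)
    {p p' : ℕ} (hp' : ∀ i, |z i| + (p : ℤ) ≤ (p' : ℤ)) (Λn : Finset (V k)) :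
    (Λn.filter fun t => window prec (Λn : Set (V k)) t p' = Dj ∩ Kc k p').card ≤
    (Λn.filter fun t => window prec (Λn : Set (V k)) t p = shiftPos prec Dj z ∩ Kc k p).card := by
  apply Finset.card_le_card_of_injOn (fun t => t + z)
  · intro t ht
    rw [Finset.mem_coe, Finset.mem_filter] at ht ⊢
    obtain ⟨h1, h2⟩ := shift_window ord hD hz hp' ht.2
    exact ⟨by exact_mod_cast h1, h2⟩
  · intro a _ b _ h
    exact add_right_cancel h

lemma div_nat_mono {a b : ℕ} (h : a ≤ b) (c : ℕ) : (a : ℝ) / c ≤ (b : ℝ) / c :=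
  div_le_div_of_nonneg_right (by exact_mod_cast h) (by positivity)

lemma sep_eventually {A A' : Set (V k)} (h : A ≠ A') :
    ∀ᶠ p : ℕ in atTop, A ∩ Kc k p ≠ A' ∩ Kc k p := by
  have : ∃ x, ¬ (x ∈ A ↔ x ∈ A') := by
    by_contra hc; push_neg at hc; exact h (Set.ext fun x => (hc x))
  obtain ⟨x, hx⟩ := this
  have hN : ∃ N : ℕ, ∀ i, |x i| ≤ (N : ℤ) := by
    refine ⟨Finset.univ.sup fun i => (x i).natAbs, fun i => ?_⟩
    rw [Int.abs_eq_natAbs]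
    exact_mod_cast Finset.le_sup (f := fun i => (x i).natAbs) (Finset.mem_univ i)
  obtain ⟨N, hNx⟩ := hN
  filter_upwards [eventually_ge_atTop N] with p hp heq
  apply hx
  have hxK : x ∈ Kc k p := fun i => le_trans (hNx i) (by exact_mod_cast hp)
  constructor
  · intro hA
    have : x ∈ A' ∩ Kc k p := heq ▸ (⟨hA, hxK⟩ : x ∈ A ∩ Kc k p)
    exact this.1
  · intro hA'
    have : x ∈ A ∩ Kc k p := heq.symm ▸ (⟨hA', hxK⟩ : x ∈ A' ∩ Kc k p)
    exact this.1

lemma key (C : CondD k) (j : ℕ) (hj : (j : ℕ∞) < C.q) {z : V k} (hz : z ∈ C.D j) :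
    ∃ i : ℕ, (i : ℕ∞) < C.q ∧ C.D i = shiftPos C.prec (C.D j) z ∧ C.lam j ≤ C.lam i := by
  set B := shiftPos C.prec (C.D j) z with hB
  obtain ⟨c, hc⟩ : ∃ c : ℕ, ∀ i, |z i| ≤ (c : ℤ) := by
    refine ⟨Finset.univ.sup fun i => (z i).natAbs, fun i => ?_⟩
    rw [Int.abs_eq_natAbs]
    exact_mod_cast Finset.le_sup (f := fun i => (z i).natAbs) (Finset.mem_univ i)
  have hDsub := C.D_subset j hj
  -- the basic cardinality inequality
  have hcard : ∀ (p p' : ℕ), p + c ≤ p' → ∀ n : ℕ,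
      ((C.Lam n).filter fun t =>
          window C.prec (C.Lam n : Set (V k)) t p' = C.D j ∩ Kc k p').card ≤
      ((C.Lam n).filter fun t =>
          window C.prec (C.Lam n : Set (V k)) t p = B ∩ Kc k p).card := by
    intro p p' hpp' n
    refine card_shift C.ord hDsub hz (fun i => ?_) (C.Lam n)
    have := hc i
    have : |z i| + (p : ℤ) ≤ (c : ℤ) + (p : ℤ) := by linarith
    calc |z i| + (p:ℤ) ≤ (c:ℤ) + (p:ℤ) := this
      _ = ((p + c : ℕ) : ℤ) := by push_cast; ring
      _ ≤ (p' : ℤ) := by exact_mod_cast hpp'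
  -- Step 1: B is one of the D i
  have hex : ∃ i : ℕ, (i : ℕ∞) < C.q ∧ C.D i = B := by
    by_contra hcon
    push_neg at hcon
    -- summability
    have hsum : Summable (fun i : {i : ℕ // (i : ℕ∞) < C.q} => C.lam i.1) := by
      by_contra hs
      have := tsum_eq_zero_of_not_summable hs
      rw [C.lam_sum] at this
      norm_num at this
    have hlamj := C.lam_pos j hj
    have hhas : HasSum (fun i : {i : ℕ // (i : ℕ∞) < C.q} => C.lam i.1) 1 := by
      have := hsum.hasSum
      rwa [C.lam_sum] at this
    have hFev : ∀ᶠ F : Finset {i : ℕ // (i : ℕ∞) < C.q} in atTop,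
        1 - C.lam j / 2 < ∑ i ∈ F, C.lam i.1 :=
      hhas.eventually (Ioi_mem_nhds (by linarith))
    obtain ⟨F, hF⟩ := hFev.exists
    set F' : Finset ℕ := F.image Subtype.val with hF'
    have hF'q : ∀ l ∈ F', (l : ℕ∞) < C.q := by
      intro l hl
      obtain ⟨⟨l', hl'⟩, _, rfl⟩ := Finset.mem_image.1 hl
      exact hl'
    have hsumF' : ∑ l ∈ F', C.lam l = ∑ i ∈ F, C.lam i.1 :=
      Finset.sum_image (fun a _ b _ h => Subtype.ext h)
    -- choose p
    have ev1 : ∀ᶠ p : ℕ in atTop, ∀ i ∈ F', C.D i ∩ Kc k p ≠ B ∩ Kc k p :=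
      (eventually_all_finset F').2 fun i hi => sep_eventually (hcon i (hF'q i hi))
    have ev2 : ∀ᶠ p : ℕ in atTop, ∀ i ∈ F', ∀ i' ∈ F', i ≠ i' →
        C.D i ∩ Kc k p ≠ C.D i' ∩ Kc k p := by
      rw [eventually_all_finset]
      intro i hi
      rw [eventually_all_finset]
      intro i' hi'
      by_cases hii : i = i'
      · exact Eventually.of_forall fun p h => absurd hii h
      · exact (sep_eventually (C.D_ne i i' (hF'q i hi) (hF'q i' hi') hii)).mono
          fun p h _ => h
    have ev3 : ∀ᶠ p : ℕ in atTop, 1 - C.lam j < ∑ i ∈ F', C.lamP i p := by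
      have ht : Tendsto (fun p => ∑ i ∈ F', C.lamP i p) atTop
          (nhds (∑ i ∈ F', C.lam i)) :=
        tendsto_finset_sum F' fun i hi => C.tendsto_lam i (hF'q i hi)
      apply ht.eventually (Ioi_mem_nhds ?_)
      rw [hsumF']; linarith
    obtain ⟨p, ⟨h1, h2⟩, h3⟩ := ((ev1.and ev2).and ev3).exists
    -- per-n inequality
    have hperN : ∀ (p' : ℕ), p + c ≤ p' → ∀ n : ℕ,
        (((C.Lam n).filter fun t =>
            window C.prec (C.Lam n : Set (V k)) t p' = C.D j ∩ Kc k p').card : ℝ) /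
            ((C.Lam n).card : ℝ) +
        ∑ i ∈ F', (((C.Lam n).filter fun t =>
            window C.prec (C.Lam n : Set (V k)) t p = C.D i ∩ Kc k p).card : ℝ) /
            ((C.Lam n).card : ℝ) ≤ 1 := by
      intro p' hpp' n
      let Λn := C.Lam n
      let TB := Λn.filter fun t => window C.prec (Λn : Set (V k)) t p = B ∩ Kc k p
      let Ti : ℕ → Finset (V k) := fun i =>
        Λn.filter fun t => window C.prec (Λn : Set (V k)) t p = C.D i ∩ Kc k p
      have hnat : (Λn.filter fun t =>
            window C.prec (Λn : Set (V k)) t p' = C.D j ∩ Kc k p').card +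
          ∑ i ∈ F', (Ti i).card ≤ Λn.card := by
        have hTBle : (Λn.filter fun t =>
            window C.prec (Λn : Set (V k)) t p' = C.D j ∩ Kc k p').card ≤ TB.card :=
          hcard p p' hpp' n
        have hdisj : ∑ i ∈ F', (Ti i).card ≤ (Λn \ TB).card := by
          rw [← Finset.card_biUnion]
          · apply Finset.card_le_card
            intro t ht
            obtain ⟨i, hi, hti⟩ := Finset.mem_biUnion.1 ht
            rw [Finset.mem_filter] at hti
            rw [Finset.mem_sdiff]
            refine ⟨hti.1, ?_⟩
            rw [Finset.mem_filter]
            rintro ⟨-, hw⟩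
            exact h1 i hi (hti.2 ▸ hw)
          · intro i hi i' hi' hii
            apply Finset.disjoint_left.2
            intro t hti hti'
            rw [Finset.mem_filter] at hti hti'
            exact h2 i hi i' hi' hii (hti.2 ▸ hti'.2)
        have hTBsub : TB ⊆ Λn := Finset.filter_subset _ _
        have := Finset.card_sdiff_add_card_eq_card hTBsub
        omega
      -- pass to reals
      rw [← Finset.sum_div, ← Nat.cast_sum, ← add_div]
      rcases Nat.eq_zero_or_pos Λn.card with h0 | h0
      · rw [show (C.Lam n) = Λn from rfl, h0]; simp
      · rw [div_le_one (by exact_mod_cast h0)]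
        exact_mod_cast hnat
    -- take n-limits
    have hlim : ∀ (p' : ℕ), p + c ≤ p' →
        C.lamP j p' + ∑ i ∈ F', C.lamP i p ≤ 1 := by
      intro p' hpp'
      have hT1 : Tendsto (fun n =>
          (((C.Lam n).filter fun t =>
              window C.prec (C.Lam n : Set (V k)) t p' = C.D j ∩ Kc k p').card : ℝ) /
              ((C.Lam n).card : ℝ) +
          ∑ i ∈ F', (((C.Lam n).filter fun t =>
              window C.prec (C.Lam n : Set (V k)) t p = C.D i ∩ Kc k p).card : ℝ) /
              ((C.Lam n).card : ℝ)) atTop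
          (nhds (C.lamP j p' + ∑ i ∈ F', C.lamP i p)) :=
        (C.tendsto_lamP j p' hj).add
          (tendsto_finset_sum F' fun i hi => C.tendsto_lamP i p (hF'q i hi))
      exact le_of_tendsto_of_tendsto hT1 tendsto_const_nhds
        (Eventually.of_forall (hperN p' hpp'))
    have hfin : C.lam j ≤ 1 - ∑ i ∈ F', C.lamP i p := by
      apply le_of_tendsto (C.tendsto_lam j hj)
      filter_upwards [eventually_ge_atTop (p + c)] with p' hp'
      linarith [hlim p' hp']
    linarith
  obtain ⟨i, hiq, hiB⟩ := hex
  refine ⟨i, hiq, hiB, ?_⟩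
  -- Step 2: lam j ≤ lam i
  have hstep : ∀ p p' : ℕ, p + c ≤ p' → C.lamP j p' ≤ C.lamP i p := by
    intro p p' hpp'
    apply le_of_tendsto_of_tendsto (C.tendsto_lamP j p' hj) (C.tendsto_lamP i p hiq)
    apply Eventually.of_forall
    intro n
    have := hcard p p' hpp' n
    rw [← hiB] at this
    exact div_nat_mono this _
  have h1 : ∀ p : ℕ, C.lam j ≤ C.lamP i p := by
    intro p
    apply le_of_tendsto (C.tendsto_lam j hj)
    filter_upwards [eventually_ge_atTop (p + c)] with p' hp'
    exact hstep p p' hp'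
  exact le_of_tendsto_of_tendsto tendsto_const_nhds (C.tendsto_lam i hiq)
    (Eventually.of_forall h1)

/-- translated copies of the `D_j`'s:
for every `j ≤ q` and `z ∈ D_j` there is `i ≤ q` with `D_i = ((D_j)_{-z})⁺` and `λ_i ≥ λ_j`;
moreover the collection of distinct sets `((D_j)_{-z})⁺`, `z ∈ D_j \ 𝓖_j`, is finite, its
cardinality is at most `⌊1/λ_j⌋ - 1`, and each of its members is some `D_l` with `λ_l ≥ λ_j`. -/
theorem stmt1 (k : ℕ) (hk : 1 ≤ k) (C : CondD k) :
    ∀ j : ℕ, (j : ℕ∞) < C.q →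
      (∀ z ∈ C.D j, ∃ i : ℕ, (i : ℕ∞) < C.q ∧
          C.D i = shiftPos C.prec (C.D j) z ∧ C.lam j ≤ C.lam i) ∧
      ({A : Set (V k) | ∃ z ∈ C.D j \ Gset C.prec (C.D j), A = shiftPos C.prec (C.D j) z}.Finite ∧
        {A : Set (V k) |
            ∃ z ∈ C.D j \ Gset C.prec (C.D j), A = shiftPos C.prec (C.D j) z}.ncard ≤
          Nat.floor (1 / C.lam j) - 1 ∧
        ∀ A ∈ {A : Set (V k) | ∃ z ∈ C.D j \ Gset C.prec (C.D j),
            A = shiftPos C.prec (C.D j) z},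
          ∃ l : ℕ, (l : ℕ∞) < C.q ∧ C.D l = A ∧ C.lam j ≤ C.lam l) := by
  intro j hj
  have hlamj := C.lam_pos j hj
  -- part 2 setup
  set S := {A : Set (V k) | ∃ z ∈ C.D j \ Gset C.prec (C.D j), A = shiftPos C.prec (C.D j) z}
    with hS
  set I : Set ℕ := {l : ℕ | (l : ℕ∞) < C.q ∧ C.lam j ≤ C.lam l} with hI
  have hsum : Summable (fun i : {i : ℕ // (i : ℕ∞) < C.q} => C.lam i.1) := by
    by_contra hs
    have := tsum_eq_zero_of_not_summable hs
    rw [C.lam_sum] at this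
    norm_num at this
  have hGcard : ∀ G : Finset ℕ, ↑G ⊆ I → G.card ≤ Nat.floor (1 / C.lam j) := by
    intro G hG
    have hGq : ∀ l ∈ G, (l : ℕ∞) < C.q := fun l hl => (hG hl).1
    have hGlam : ∀ l ∈ G, C.lam j ≤ C.lam l := fun l hl => (hG hl).2
    -- sum over G is at most 1
    have hle1 : ∑ l ∈ G, C.lam l ≤ 1 := by
      set G' : Finset {i : ℕ // (i : ℕ∞) < C.q} :=
        G.attach.map ⟨fun x => ⟨x.1, hGq x.1 x.2⟩, fun a b h => by
          have h' := congrArg Subtype.val h; exact Subtype.ext h'⟩ with hG'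
      have heq : ∑ i ∈ G', C.lam i.1 = ∑ l ∈ G, C.lam l := by
        rw [hG', Finset.sum_map]
        exact Finset.sum_attach G (fun l => C.lam l)
      rw [← heq, ← C.lam_sum]
      exact Summable.sum_le_tsum G' (fun i _ => (C.lam_pos i.1 i.2).le) hsum
    have hcard : (G.card : ℝ) * C.lam j ≤ 1 := by
      calc (G.card : ℝ) * C.lam j = ∑ _l ∈ G, C.lam j := by
            rw [Finset.sum_const, nsmul_eq_mul]
        _ ≤ ∑ l ∈ G, C.lam l := Finset.sum_le_sum fun l hl => hGlam l hl
        _ ≤ 1 := hle1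
    have : (G.card : ℝ) ≤ 1 / C.lam j := by
      rw [le_div_iff₀ hlamj]; exact hcard
    exact Nat.le_floor this
  have hIfin : I.Finite := by
    by_contra hinf
    obtain ⟨G, hGsub, hGcard'⟩ :=
      Set.Infinite.exists_subset_card_eq hinf (Nat.floor (1 / C.lam j) + 1)
    have := hGcard G hGsub
    omega
  have hIcard : I.ncard ≤ Nat.floor (1 / C.lam j) := by
    rw [Set.ncard_eq_toFinset_card I hIfin]
    exact hGcard _ (by simp)
  have hjI : j ∈ I := ⟨hj, le_refl _⟩
  have hDinj : Set.InjOn C.D I := by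
    intro a ha b hb hab
    by_contra hne
    exact C.D_ne a b ha.1 hb.1 hne hab
  have hsub : S ⊆ (C.D '' I) \ {C.D j} := by
    rintro A ⟨z, hzmem, rfl⟩
    have hzD : z ∈ C.D j := hzmem.1
    have hzG : z ∉ Gset C.prec (C.D j) := hzmem.2
    obtain ⟨l, hlq, hlB, hll⟩ := key C j hj hzD
    have hne : shiftPos C.prec (C.D j) z ≠ C.D j := by
      intro hcontra
      exact hzG ⟨Set.mem_insert_of_mem _ hzD, hcontra⟩
    refine ⟨⟨l, ⟨hlq, hll⟩, hlB⟩, ?_⟩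
    simp only [Set.mem_singleton_iff]
    exact hne
  have himfin : ((C.D '' I) \ {C.D j}).Finite := (hIfin.image C.D).diff
  have hSfin : S.Finite := himfin.subset hsub
  refine ⟨fun z hz => key C j hj hz, hSfin, ?_, ?_⟩
  · calc S.ncard ≤ ((C.D '' I) \ {C.D j}).ncard := Set.ncard_le_ncard hsub himfin
      _ = (C.D '' I).ncard - 1 :=
        Set.ncard_diff_singleton_of_mem (Set.mem_image_of_mem _ hjI)
      _ = I.ncard - 1 := by rw [Set.ncard_image_of_injOn hDinj]
      _ ≤ Nat.floor (1 / C.lam j) - 1 := Nat.sub_le_sub_right hIcard 1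
  · rintro A ⟨z, hzmem, rfl⟩
    exact key C j hj hzmem.1

end Paper
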